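/- Let f : ℍ^{N×S} → ℝ be ℝ-differentiable at Q. Then the following are equivalent: (a) the real Fréchet derivative of f at Q is the zero map (equivalently, all 4NS real partial derivatives of f at Q vanish); (b) ∂f/∂Q = 0 at Q; (c) ∂f/∂Q* = 0 at Q; (d) ∂f/∂Q^ν = 0 at Q for every ν ∈ {1,i,j,k}; (e) ∂f/∂Q^{ν*} = 0 at Q for every ν ∈ {1,i,j,k}. Hence stationary points of f can be found by setting either ∂f/∂Q or ∂f/∂Q* to zero. -/

import Mathlib

open scoped Quaternion

noncomputable section

/-- The imaginary unit `i` of the quaternions. -/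
def qI : ℍ[ℝ] := ⟨0, 1, 0, 0⟩
/-- The imaginary unit `j` of the quaternions. -/
def qJ : ℍ[ℝ] := ⟨0, 0, 1, 0⟩
/-- The imaginary unit `k` of the quaternions. -/
def qK : ℍ[ℝ] := ⟨0, 0, 0, 1⟩

/-- The `N × S` quaternion matrix with entry `d` at position `(n,s)` and `0` elsewhere. -/
def single {N S : ℕ} (n : Fin N) (s : Fin S) (d : ℍ[ℝ]) : Fin N → Fin S → ℍ[ℝ] :=
  Pi.single n (Pi.single s d)

/-- Real directional (Fréchet) derivative of a real-valued function of a matrix variable, in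
the direction `d` at the single entry `(n,s)` (the other entries held fixed). -/
def pdR {N S : ℕ} (f : (Fin N → Fin S → ℍ[ℝ]) → ℝ) (Q : Fin N → Fin S → ℍ[ℝ])
    (n : Fin N) (s : Fin S) (d : ℍ[ℝ]) : ℝ :=
  fderiv ℝ f Q (single n s d)

/-- Left GHR derivative `∂f/∂q_{ns}^ν` of a real-valued function `f` with respect to the entry
`q_{ns}`: `¼(∂f/∂q_a − (∂f/∂q_b) i^ν − (∂f/∂q_c) j^ν − (∂f/∂q_d) k^ν)`, `x^ν = ν x ν⁻¹`. -/
def ghrER {N S : ℕ} (ν : ℍ[ℝ]) (f : (Fin N → Fin S → ℍ[ℝ]) → ℝ)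
    (Q : Fin N → Fin S → ℍ[ℝ]) (n : Fin N) (s : Fin S) : ℍ[ℝ] :=
  (1 / 4 : ℝ) • ((pdR f Q n s 1) • (1 : ℍ[ℝ]) - (pdR f Q n s qI) • (ν * qI * ν⁻¹)
    - (pdR f Q n s qJ) • (ν * qJ * ν⁻¹) - (pdR f Q n s qK) • (ν * qK * ν⁻¹))

/-- Conjugate left GHR derivative `∂f/∂q_{ns}^{ν*}` of a real-valued function `f`. -/
def ghrStarER {N S : ℕ} (ν : ℍ[ℝ]) (f : (Fin N → Fin S → ℍ[ℝ]) → ℝ)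
    (Q : Fin N → Fin S → ℍ[ℝ]) (n : Fin N) (s : Fin S) : ℍ[ℝ] :=
  (1 / 4 : ℝ) • ((pdR f Q n s 1) • (1 : ℍ[ℝ]) + (pdR f Q n s qI) • (ν * qI * ν⁻¹)
    + (pdR f Q n s qJ) • (ν * qJ * ν⁻¹) + (pdR f Q n s qK) • (ν * qK * ν⁻¹))



lemma pdR_def {N S : ℕ} (f : (Fin N → Fin S → ℍ[ℝ]) → ℝ) (Q : Fin N → Fin S → ℍ[ℝ])
    (n : Fin N) (s : Fin S) (d : ℍ[ℝ]) : fderiv ℝ f Q (single n s d) = pdR f Q n s d := rfl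

lemma qIJK_comp : qI.re = 0 ∧ qI.imI = 1 ∧ qI.imJ = 0 ∧ qI.imK = 0 ∧ qJ.re = 0 ∧ qJ.imI = 0 ∧
    qJ.imJ = 1 ∧ qJ.imK = 0 ∧ qK.re = 0 ∧ qK.imI = 0 ∧ qK.imJ = 0 ∧ qK.imK = 1 := by
  refine ⟨rfl, rfl, rfl, rfl, rfl, rfl, rfl, rfl, rfl, rfl, rfl, rfl⟩

lemma quat_decomp (q : ℍ[ℝ]) : q = q.re • (1:ℍ[ℝ]) + q.imI • qI + q.imJ • qJ + q.imK • qK := by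
  ext <;> simp [qIJK_comp]

lemma single_decomp {N S : ℕ} (n : Fin N) (s : Fin S) (q : ℍ[ℝ]) :
    single n s q = q.re • single n s 1 + q.imI • single n s qI
      + q.imJ • single n s qJ + q.imK • single n s qK := by
  conv_lhs => rw [quat_decomp q]
  simp [single, Pi.single_add, Pi.single_smul]

lemma sum_single {N S : ℕ} (X : Fin N → Fin S → ℍ[ℝ]) :
    ∑ n, ∑ s, single n s (X n s) = X := by
  funext a b
  simp [single, Finset.sum_apply, Pi.single_apply,
    apply_ite (fun (g : Fin S → ℍ[ℝ]) => g b)]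

lemma fderiv_zero_of_pd {N S : ℕ} (f : (Fin N → Fin S → ℍ[ℝ]) → ℝ) (Q : Fin N → Fin S → ℍ[ℝ])
    (h1 : ∀ n s, pdR f Q n s 1 = 0) (h2 : ∀ n s, pdR f Q n s qI = 0)
    (h3 : ∀ n s, pdR f Q n s qJ = 0) (h4 : ∀ n s, pdR f Q n s qK = 0) :
    fderiv ℝ f Q = 0 := by
  ext X
  have hX := sum_single X
  have hterm : ∀ (n : Fin N) (s : Fin S), fderiv ℝ f Q (single n s (X n s)) = 0 := by
    intro n s
    rw [single_decomp, map_add, map_add, map_add, map_smul, map_smul, map_smul, map_smul,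
      pdR_def, pdR_def, pdR_def, pdR_def, h1, h2, h3, h4]
    simp
  calc fderiv ℝ f Q X = fderiv ℝ f Q (∑ n, ∑ s, single n s (X n s)) := by rw [hX]
    _ = ∑ n, ∑ s, fderiv ℝ f Q (single n s (X n s)) := by rw [map_sum]; simp [map_sum]
    _ = 0 := by simp [hterm]

lemma ghrER_one_zero_iff {N S : ℕ} (f : (Fin N → Fin S → ℍ[ℝ]) → ℝ)
    (Q : Fin N → Fin S → ℍ[ℝ]) (n : Fin N) (s : Fin S) :
    ghrER (1 : ℍ[ℝ]) f Q n s = 0 ↔ pdR f Q n s 1 = 0 ∧ pdR f Q n s qI = 0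
      ∧ pdR f Q n s qJ = 0 ∧ pdR f Q n s qK = 0 := by
  simp [ghrER, Quaternion.ext_iff, qIJK_comp]

lemma ghrStarER_one_zero_iff {N S : ℕ} (f : (Fin N → Fin S → ℍ[ℝ]) → ℝ)
    (Q : Fin N → Fin S → ℍ[ℝ]) (n : Fin N) (s : Fin S) :
    ghrStarER (1 : ℍ[ℝ]) f Q n s = 0 ↔ pdR f Q n s 1 = 0 ∧ pdR f Q n s qI = 0
      ∧ pdR f Q n s qJ = 0 ∧ pdR f Q n s qK = 0 := by
  simp [ghrStarER, Quaternion.ext_iff, qIJK_comp]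

/-- **Equivalent conditions for a stationary point** (Theorem 3): for a real-valued
`f : ℍ^{N×S} → ℝ` differentiable at `Q`, vanishing of the real Fréchet derivative, of
`∂f/∂Q`, of `∂f/∂Q*`, of all `∂f/∂Q^ν`, and of all `∂f/∂Q^{ν*}` for `ν ∈ {1,i,j,k}`
are equivalent. -/
theorem stationary_point_tfae {N S : ℕ}
    (f : (Fin N → Fin S → ℍ[ℝ]) → ℝ) (Q : Fin N → Fin S → ℍ[ℝ])
    (hf : DifferentiableAt ℝ f Q) :
    List.TFAE
      [fderiv ℝ f Q = 0,
       (fun (n : Fin N) (s : Fin S) => ghrER (1 : ℍ[ℝ]) f Q n s) = fun _ _ => 0,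
       (fun (n : Fin N) (s : Fin S) => ghrStarER (1 : ℍ[ℝ]) f Q n s) = fun _ _ => 0,
       ∀ ν ∈ ({1, qI, qJ, qK} : Set ℍ[ℝ]),
         (fun (n : Fin N) (s : Fin S) => ghrER ν f Q n s) = fun _ _ => 0,
       ∀ ν ∈ ({1, qI, qJ, qK} : Set ℍ[ℝ]),
         (fun (n : Fin N) (s : Fin S) => ghrStarER ν f Q n s) = fun _ _ => 0] := by
  have hpd : fderiv ℝ f Q = 0 → ∀ (n : Fin N) (s : Fin S) (d : ℍ[ℝ]), pdR f Q n s d = 0 := by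
    intro h n s d
    rw [← pdR_def, h]
    simp
  tfae_have 1 → 4 := by
    intro h ν _
    funext n s
    simp [ghrER, hpd h]
  tfae_have 1 → 5 := by
    intro h ν _
    funext n s
    simp [ghrStarER, hpd h]
  tfae_have 4 → 2 := fun h => h 1 (by simp)
  tfae_have 5 → 3 := fun h => h 1 (by simp)
  tfae_have 2 → 1 := by
    intro h
    have h' : ∀ n s, ghrER (1 : ℍ[ℝ]) f Q n s = 0 := fun n s => congrFun (congrFun h n) s
    exact fderiv_zero_of_pd f Q (fun n s => ((ghrER_one_zero_iff f Q n s).1 (h' n s)).1)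
      (fun n s => ((ghrER_one_zero_iff f Q n s).1 (h' n s)).2.1)
      (fun n s => ((ghrER_one_zero_iff f Q n s).1 (h' n s)).2.2.1)
      (fun n s => ((ghrER_one_zero_iff f Q n s).1 (h' n s)).2.2.2)
  tfae_have 3 → 1 := by
    intro h
    have h' : ∀ n s, ghrStarER (1 : ℍ[ℝ]) f Q n s = 0 := fun n s => congrFun (congrFun h n) s
    exact fderiv_zero_of_pd f Q (fun n s => ((ghrStarER_one_zero_iff f Q n s).1 (h' n s)).1)
      (fun n s => ((ghrStarER_one_zero_iff f Q n s).1 (h' n s)).2.1)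
      (fun n s => ((ghrStarER_one_zero_iff f Q n s).1 (h' n s)).2.2.1)
      (fun n s => ((ghrStarER_one_zero_iff f Q n s).1 (h' n s)).2.2.2)
  tfae_finish
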